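/- Fix a real τ with 0 < τ < 1. Define for an integer d ≥ 1 and real t ≥ 0 the normalized gradient-descent loss r_d(t) = (1/H_{d,1}) · Σ_{k=1}^d k^{−1}(1 − k^{−1})^{2t}, where H_{d,1} = Σ_{k=1}^d k^{−1}. Then lim_{d→∞} r_d(d^τ/2) = 1 − τ. -/

import Mathlib

open Filter Finset Real

lemma ing1 (k : ℕ) (hk : 1 ≤ k) : Real.log (k+1) - Real.log k ≤ 1/k := by
  have hk0 : (0:ℝ) < k := by exact_mod_cast hk
  have h := Real.log_le_sub_one_of_pos (x := ((k:ℝ)+1)/k) (by positivity)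
  rw [Real.log_div (by positivity) (by positivity)] at h
  have he : ((k:ℝ)+1)/k - 1 = 1/k := by field_simp; ring
  linarith [he ▸ h]

lemma ing2 (k : ℕ) (hk : 1 ≤ k) : 1/((k:ℝ)+1) ≤ Real.log (k+1) - Real.log k := by
  have hk0 : (0:ℝ) < k := by exact_mod_cast hk
  have h := Real.log_le_sub_one_of_pos (x := (k:ℝ)/(k+1)) (by positivity)
  rw [Real.log_div (by positivity) (by positivity)] at h
  have he : (k:ℝ)/(k+1) - 1 = -(1/(k+1)) := by field_simp; ring
  linarith [he ▸ h]

lemma sum_inv_le (m : ℕ) (hm : 1 ≤ m) : ∀ n, m ≤ n →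
    ∑ k ∈ Finset.Icc (m+1) n, (k:ℝ)⁻¹ ≤ Real.log n - Real.log m := by
  intro n hn
  induction n, hn using Nat.le_induction with
  | base => simp [Finset.Icc_eq_empty_of_lt (Nat.lt_succ_self m)]
  | succ n hn ih =>
      rw [Finset.sum_Icc_succ_top (by omega)]
      have h1 := ing2 n (by omega)
      push_cast at ih h1 ⊢
      have he : ((n:ℝ)+1)⁻¹ = 1/((n:ℝ)+1) := (one_div _).symm
      linarith [he ▸ le_refl (((n:ℝ)+1)⁻¹)]

lemma le_sum_inv (m : ℕ) (hm : 1 ≤ m) : ∀ n, m ≤ n →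
    Real.log (n+1) - Real.log m ≤ ∑ k ∈ Finset.Icc m n, (k:ℝ)⁻¹ := by
  intro n hn
  induction n, hn using Nat.le_induction with
  | base =>
      simp only [Finset.Icc_self, Finset.sum_singleton]
      have h1 := ing1 m hm
      have he : 1/(m:ℝ) = (m:ℝ)⁻¹ := one_div _
      linarith [he ▸ h1]
  | succ n hn ih =>
      rw [Finset.sum_Icc_succ_top (by omega)]
      have h1 := ing1 (n+1) (by omega)
      push_cast at ih h1 ⊢
      have he : 1/((n:ℝ)+1) = ((n:ℝ)+1)⁻¹ := one_div _
      linarith [he ▸ h1]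

lemma lem_log_atTop : Tendsto (fun d : ℕ => Real.log d) atTop atTop :=
  Real.tendsto_log_atTop.comp tendsto_natCast_atTop_atTop

lemma lem_ratio (c a : ℝ) :
    Tendsto (fun d : ℕ => (c * Real.log d + a) / (1 + Real.log d)) atTop (nhds c) := by
  have h1 : Tendsto (fun d : ℕ => 1 + Real.log d) atTop atTop :=
    tendsto_atTop_add_const_left _ 1 lem_log_atTop
  have h2 : Tendsto (fun d : ℕ => (a - c) / (1 + Real.log d)) atTop (nhds 0) :=
    Tendsto.div_atTop tendsto_const_nhds h1
  have h3 : Tendsto (fun d : ℕ => c + (a - c) / (1 + Real.log d)) atTop (nhds c) := by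
    simpa using tendsto_const_nhds.add h2
  refine h3.congr' ?_
  filter_upwards [eventually_ge_atTop 1] with d hd
  have hl : (0:ℝ) ≤ Real.log d := Real.log_natCast_nonneg d
  have hne : (1:ℝ) + Real.log d ≠ 0 := by linarith
  field_simp
  ring

lemma lem_pow0 {s : ℝ} (hs : s < 0) : Tendsto (fun d : ℕ => (d:ℝ) ^ s) atTop (nhds 0) := by
  have := (tendsto_rpow_neg_atTop (y := -s) (by linarith)).comp tendsto_natCast_atTop_atTop
  simpa [Function.comp_def] using this

lemma lem_exp0 {e : ℝ} (he : 0 < e) :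
    Tendsto (fun d : ℕ => Real.exp (-((d:ℝ) ^ e / 2))) atTop (nhds 0) := by
  have h1 : Tendsto (fun d : ℕ => (d:ℝ) ^ e / 2) atTop atTop :=
    ((tendsto_rpow_atTop he).comp tendsto_natCast_atTop_atTop).atTop_div_const (by norm_num)
  exact Real.tendsto_exp_atBot.comp (tendsto_neg_atTop_atBot.comp h1)

/-- eventually, ⌈(d:ℝ)^σ⌉₊ ≤ d and 2 ≤ ⌈(d:ℝ)^σ⌉₊ -/
lemma lem_ceil (σ : ℝ) (hσ0 : 0 < σ) (hσ1 : σ < 1) :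
    ∀ᶠ d : ℕ in atTop, ⌈(d:ℝ)^σ⌉₊ ≤ d ∧ 2 ≤ ⌈(d:ℝ)^σ⌉₊ := by
  have hp := (lem_pow0 (show σ - 1 < 0 by linarith)).eventually_lt_const (show (0:ℝ) < 1 by norm_num)
  filter_upwards [hp, eventually_ge_atTop 2] with d hd1 hd2
  have hd0 : (0:ℝ) < d := by positivity
  constructor
  · refine Nat.ceil_le.2 ?_
    have : (d:ℝ)^σ = (d:ℝ)^(σ-1) * (d:ℝ) := by
      rw [← Real.rpow_add_one (ne_of_gt hd0)]; ring_nf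
    rw [this]
    calc (d:ℝ)^(σ-1) * d ≤ 1 * d := by
          apply mul_le_mul_of_nonneg_right hd1.le hd0.le
      _ = d := one_mul _
  · have h1 : (1:ℝ) < (d:ℝ)^σ := by
      rw [Real.one_lt_rpow_iff_of_pos hd0]
      left
      exact ⟨by exact_mod_cast hd2, hσ0⟩
    have h2 : (1:ℕ) < ⌈(d:ℝ)^σ⌉₊ := Nat.lt_ceil.2 (by exact_mod_cast h1)
    omega

set_option maxHeartbeats 1000000 in
/-- α = 1 (Zipf) case of the gradient-descent scaling law: the normalized loss
`r_d(t) = (1/H_{d,1}) Σ_{k=1}^d k^{−1}(1−k^{−1})^{2t}` at `t = d^τ/2`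
converges to `1 − τ`. -/
theorem stmt9 (τ : ℝ) (hτ0 : 0 < τ) (hτ1 : τ < 1) :
    Tendsto
      (fun d : ℕ =>
        (∑ k ∈ Finset.Icc 1 d,
          (k : ℝ) ^ (-1 : ℝ) * (1 - (k : ℝ) ^ (-1 : ℝ)) ^ (2 * ((d : ℝ) ^ τ / 2))) /
        (∑ k ∈ Finset.Icc 1 d, (k : ℝ) ^ (-1 : ℝ)))
      atTop (nhds (1 - τ)) := by
  have hexp : ∀ y : ℝ, 2 * (y/2) = y := fun y => by ring
  simp only [hexp, Real.rpow_neg_one]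
  rw [tendsto_order]
  constructor
  · -- lower bound
    intro a ha
    have hm1 : min (1-a) 1 ≤ 1 := min_le_right _ _
    have hm2 : min (1-a) 1 ≤ 1-a := min_le_left _ _
    have hmin : τ < min (1-a) 1 := lt_min (by linarith) hτ1
    set τ' : ℝ := (τ + min (1-a) 1)/2 with hτ'def
    have hτ'l : τ < τ' := by rw [hτ'def]; linarith
    have hτ'1 : τ' < 1 := by rw [hτ'def]; linarith
    have haτ' : a < 1 - τ' := by rw [hτ'def]; linarith
    have hBL : Tendsto (fun d : ℕ =>
        (1 - (d:ℝ)^(τ-τ')) * (((1-τ') * Real.log d - Real.log 2) / (1 + Real.log d)))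
        atTop (nhds (1-τ')) := by
      have h1 : Tendsto (fun d : ℕ => 1 - (d:ℝ)^(τ-τ')) atTop (nhds 1) := by
        simpa using tendsto_const_nhds.sub (lem_pow0 (show τ-τ' < 0 by linarith))
      have h2 := lem_ratio (1-τ') (-(Real.log 2))
      have h3 := h1.mul h2
      simp only [one_mul] at h3
      convert h3 using 3 <;> ring
    filter_upwards [hBL.eventually_const_lt haτ',
      lem_ceil τ' (lt_trans hτ0 hτ'l) hτ'1,
      (lem_pow0 (show τ-τ' < 0 by linarith)).eventually_lt_const (show (0:ℝ) < 1/2 by norm_num),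
      lem_log_atTop.eventually_ge_atTop (Real.log 2 / (1-τ')),
      eventually_ge_atTop 2] with d hd1 hd2 hd3 hd4 hd5
    set T : ℝ := (d:ℝ)^τ with hT
    set K := ⌈(d:ℝ)^τ'⌉₊ with hK
    obtain ⟨hKd, hK2⟩ := hd2
    have hd0 : (0:ℝ) < d := by exact_mod_cast (by omega : 0 < d)
    have hd1' : (1:ℝ) ≤ d := by exact_mod_cast (by omega : 1 ≤ d)
    have hK0 : (0:ℝ) < K := by exact_mod_cast (by omega : 0 < K)
    have hK1 : (1:ℝ) ≤ K := by exact_mod_cast (by omega : 1 ≤ K)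
    have hKge : (d:ℝ)^τ' ≤ K := Nat.le_ceil _
    have hKle : (K:ℝ) ≤ (d:ℝ)^τ' + 1 := (Nat.ceil_lt_add_one (by positivity)).le
    have hdτ'1 : (1:ℝ) ≤ (d:ℝ)^τ' := Real.one_le_rpow hd1' (by linarith)
    have hT1 : (1:ℝ) ≤ T := Real.one_le_rpow hd1' hτ0.le
    -- denominator bounds
    have hHpos : 0 < ∑ k ∈ Finset.Icc 1 d, (k:ℝ)⁻¹ := by
      apply Finset.sum_pos
      · intro k hk
        have hk1 : 1 ≤ k := (Finset.mem_Icc.1 hk).1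
        have : (0:ℝ) < k := by exact_mod_cast hk1
        positivity
      · exact ⟨1, Finset.mem_Icc.2 ⟨le_refl 1, by omega⟩⟩
    have hHub : ∑ k ∈ Finset.Icc 1 d, (k:ℝ)⁻¹ ≤ 1 + Real.log d := by
      have hsplit : Finset.Icc 1 d = insert 1 (Finset.Icc 2 d) := by
        ext x; simp only [Finset.mem_Icc, Finset.mem_insert]; omega
      rw [hsplit, Finset.sum_insert (by simp)]
      have h := sum_inv_le 1 le_rfl d (by omega)
      norm_num at h ⊢
      linarith
    -- term nonnegativity
    have hterm_nonneg : ∀ k ∈ Finset.Icc 1 d, 0 ≤ (k:ℝ)⁻¹ * (1 - (k:ℝ)⁻¹) ^ T := by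
      intro k hk
      have hk1 : 1 ≤ k := (Finset.mem_Icc.1 hk).1
      have hk0 : (0:ℝ) < k := by exact_mod_cast hk1
      have hki : (k:ℝ)⁻¹ ≤ 1 := by
        rw [inv_le_one_iff₀]; right; exact_mod_cast hk1
      have hb : (0:ℝ) ≤ 1 - (k:ℝ)⁻¹ := by linarith
      exact mul_nonneg (by positivity) (Real.rpow_nonneg hb T)
    have hstep1 : ∑ k ∈ Finset.Icc K d, (k:ℝ)⁻¹ * (1-(k:ℝ)⁻¹)^T
        ≤ ∑ k ∈ Finset.Icc 1 d, (k:ℝ)⁻¹ * (1-(k:ℝ)⁻¹)^T :=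
      Finset.sum_le_sum_of_subset_of_nonneg (Finset.Icc_subset_Icc (by omega) le_rfl)
        (fun k hk _ => hterm_nonneg k hk)
    have hKinv1 : (K:ℝ)⁻¹ ≤ 1 := by rw [inv_le_one_iff₀]; right; exact hK1
    have hstep2 : ∀ k ∈ Finset.Icc K d,
        (k:ℝ)⁻¹ * (1-(K:ℝ)⁻¹)^T ≤ (k:ℝ)⁻¹ * (1-(k:ℝ)⁻¹)^T := by
      intro k hk
      obtain ⟨hk1, _⟩ := Finset.mem_Icc.1 hk
      have hk0 : (0:ℝ) < k := by
        have : 0 < k := by omega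
        exact_mod_cast this
      have hki : (k:ℝ)⁻¹ ≤ (K:ℝ)⁻¹ := inv_anti₀ hK0 (by exact_mod_cast hk1)
      apply mul_le_mul_of_nonneg_left _ (by positivity)
      exact Real.rpow_le_rpow (by linarith) (by linarith) (by linarith)
    have hBern : 1 - (d:ℝ)^(τ-τ') ≤ (1-(K:ℝ)⁻¹)^T := by
      have hb := one_add_mul_self_le_rpow_one_add (s := -(K:ℝ)⁻¹)
        (by linarith) (p := T) hT1
      rw [← sub_eq_add_neg, mul_neg, ← sub_eq_add_neg] at hb
      have h2 : T * (K:ℝ)⁻¹ ≤ (d:ℝ)^(τ-τ') := by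
        rw [Real.rpow_sub hd0, div_eq_mul_inv]
        apply mul_le_mul_of_nonneg_left _ (Real.rpow_nonneg hd0.le τ)
        exact inv_anti₀ (Real.rpow_pos_of_pos hd0 τ') hKge
      linarith
    have hsum_lb : Real.log (d+1) - Real.log K ≤ ∑ k ∈ Finset.Icc K d, (k:ℝ)⁻¹ :=
      le_sum_inv K (by omega) d hKd
    have hlogK : Real.log K ≤ Real.log 2 + τ' * Real.log d := by
      have h1 : (K:ℝ) ≤ 2 * (d:ℝ)^τ' := by linarith
      have h2 : Real.log K ≤ Real.log (2 * (d:ℝ)^τ') :=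
        Real.log_le_log hK0 h1
      rwa [Real.log_mul (by norm_num) (ne_of_gt (Real.rpow_pos_of_pos hd0 τ')),
        Real.log_rpow hd0] at h2
    have hlogd1 : Real.log d ≤ Real.log ((d:ℝ)+1) := Real.log_le_log hd0 (by linarith)
    have h1τ' : (0:ℝ) < 1 - τ' := by linarith
    have hNnn : 0 ≤ (1-τ') * Real.log d - Real.log 2 := by
      have := mul_le_mul_of_nonneg_left hd4 h1τ'.le
      rw [mul_div_cancel₀ _ (ne_of_gt h1τ')] at this
      linarith
    have hsum_lb2 : (1-τ')*Real.log d - Real.log 2 ≤ ∑ k ∈ Finset.Icc K d, (k:ℝ)⁻¹ := by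
      nlinarith [hsum_lb, hlogK, hlogd1]
    have hC0 : (0:ℝ) ≤ 1 - (d:ℝ)^(τ-τ') := by linarith
    have hsumKd_nn : 0 ≤ ∑ k ∈ Finset.Icc K d, (k:ℝ)⁻¹ := le_trans hNnn hsum_lb2
    have hnum : (1 - (d:ℝ)^(τ-τ')) * ((1-τ')*Real.log d - Real.log 2)
        ≤ ∑ k ∈ Finset.Icc 1 d, (k:ℝ)⁻¹ * (1-(k:ℝ)⁻¹)^T := by
      calc (1 - (d:ℝ)^(τ-τ')) * ((1-τ')*Real.log d - Real.log 2)
          ≤ (1 - (d:ℝ)^(τ-τ')) * ∑ k ∈ Finset.Icc K d, (k:ℝ)⁻¹ :=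
            mul_le_mul_of_nonneg_left hsum_lb2 hC0
        _ ≤ (1-(K:ℝ)⁻¹)^T * ∑ k ∈ Finset.Icc K d, (k:ℝ)⁻¹ :=
            mul_le_mul_of_nonneg_right hBern hsumKd_nn
        _ = ∑ k ∈ Finset.Icc K d, (k:ℝ)⁻¹ * (1-(K:ℝ)⁻¹)^T := by
            rw [Finset.mul_sum]; exact Finset.sum_congr rfl fun k _ => mul_comm _ _
        _ ≤ ∑ k ∈ Finset.Icc K d, (k:ℝ)⁻¹ * (1-(k:ℝ)⁻¹)^T := Finset.sum_le_sum hstep2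
        _ ≤ _ := hstep1
    have hSnn : 0 ≤ ∑ k ∈ Finset.Icc 1 d, (k:ℝ)⁻¹ * (1-(k:ℝ)⁻¹)^T :=
      Finset.sum_nonneg hterm_nonneg
    have hfinal : (1 - (d:ℝ)^(τ-τ')) * (((1-τ')*Real.log d - Real.log 2)/(1 + Real.log d))
        ≤ (∑ k ∈ Finset.Icc 1 d, (k:ℝ)⁻¹ * (1-(k:ℝ)⁻¹)^T)
          / (∑ k ∈ Finset.Icc 1 d, (k:ℝ)⁻¹) := by
      rw [← mul_div_assoc]
      exact div_le_div₀ hSnn hnum hHpos hHub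
    exact lt_of_lt_of_le hd1 hfinal
  · -- upper bound
    intro b hb
    have hmax1 : (0:ℝ) ≤ max 0 (1-b) := le_max_left _ _
    have hmax2 : (1-b:ℝ) ≤ max 0 (1-b) := le_max_right _ _
    have hmax : max 0 (1-b) < τ := max_lt hτ0 (by linarith)
    set τ'' : ℝ := (τ + max 0 (1-b))/2 with hτ''def
    have hτ''0 : 0 < τ'' := by rw [hτ''def]; linarith
    have hτ''τ : τ'' < τ := by rw [hτ''def]; linarith
    have h1b : 1 - τ'' < b := by rw [hτ''def]; linarith
    have hbε : (0:ℝ) < b - (1 - τ'') := by linarith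
    filter_upwards [lem_ceil τ'' hτ''0 (lt_trans hτ''τ hτ1),
      (lem_exp0 (show 0 < τ - τ'' by linarith)).eventually_lt_const hbε,
      eventually_ge_atTop 2] with d hd2 hd8 hd5
    set T : ℝ := (d:ℝ)^τ with hT
    set K := ⌈(d:ℝ)^τ''⌉₊ with hK
    obtain ⟨hKd, hK2⟩ := hd2
    have hd0 : (0:ℝ) < d := by exact_mod_cast (by omega : 0 < d)
    have hd1' : (1:ℝ) ≤ d := by exact_mod_cast (by omega : 1 ≤ d)
    have hlogd : 0 < Real.log d := Real.log_pos (by exact_mod_cast (by omega : 1 < d))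
    have hK0 : (0:ℝ) < K := by exact_mod_cast (by omega : 0 < K)
    have hK1 : (1:ℝ) ≤ K := by exact_mod_cast (by omega : 1 ≤ K)
    have hK2' : (2:ℝ) ≤ K := by exact_mod_cast hK2
    have hKge : (d:ℝ)^τ'' ≤ K := Nat.le_ceil _
    have hKle : (K:ℝ) ≤ (d:ℝ)^τ'' + 1 := (Nat.ceil_lt_add_one (by positivity)).le
    have hdτ''1 : (1:ℝ) ≤ (d:ℝ)^τ'' := Real.one_le_rpow hd1' hτ''0.le
    have hT0 : (0:ℝ) ≤ T := Real.rpow_nonneg hd0.le τ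
    have hKinv : (K:ℝ)⁻¹ ≤ 1/2 := by
      rw [inv_le_comm₀ hK0 (by norm_num)]
      linarith
    -- denominator bounds
    have hHpos : 0 < ∑ k ∈ Finset.Icc 1 d, (k:ℝ)⁻¹ := by
      apply Finset.sum_pos
      · intro k hk
        have hk1 : 1 ≤ k := (Finset.mem_Icc.1 hk).1
        have : (0:ℝ) < k := by exact_mod_cast hk1
        positivity
      · exact ⟨1, Finset.mem_Icc.2 ⟨le_refl 1, by omega⟩⟩
    have hHlb : Real.log d ≤ ∑ k ∈ Finset.Icc 1 d, (k:ℝ)⁻¹ := by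
      have h := le_sum_inv 1 le_rfl d (by omega)
      have h2 : Real.log d ≤ Real.log ((d:ℝ)+1) := Real.log_le_log hd0 (by linarith)
      norm_num at h
      linarith
    -- term nonnegativity and ≤ k⁻¹
    have hbase : ∀ k ∈ Finset.Icc 1 d, (0:ℝ) ≤ 1 - (k:ℝ)⁻¹ ∧ (1 - (k:ℝ)⁻¹) ≤ 1 := by
      intro k hk
      have hk1 : 1 ≤ k := (Finset.mem_Icc.1 hk).1
      have hk0 : (0:ℝ) < k := by exact_mod_cast hk1
      have hki : (k:ℝ)⁻¹ ≤ 1 := by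
        rw [inv_le_one_iff₀]; right; exact_mod_cast hk1
      have : (0:ℝ) ≤ (k:ℝ)⁻¹ := by positivity
      exact ⟨by linarith, by linarith⟩
    -- split the sum
    have hsplit : (∑ k ∈ Finset.Icc 1 K, (k:ℝ)⁻¹ * (1-(k:ℝ)⁻¹)^T)
        + ∑ k ∈ Finset.Icc (K+1) d, (k:ℝ)⁻¹ * (1-(k:ℝ)⁻¹)^T
        = ∑ k ∈ Finset.Icc 1 d, (k:ℝ)⁻¹ * (1-(k:ℝ)⁻¹)^T := by
      rw [show Finset.Icc 1 K = Finset.Ioc 0 K from Finset.Icc_add_one_left_eq_Ioc 0 K,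
        show Finset.Icc (K+1) d = Finset.Ioc K d from Finset.Icc_add_one_left_eq_Ioc K d,
        show Finset.Icc 1 d = Finset.Ioc 0 d from Finset.Icc_add_one_left_eq_Ioc 0 d]
      exact Finset.sum_Ioc_consecutive _ (by omega) (by omega)
    -- part 1
    have hbK : (0:ℝ) < 1 - (K:ℝ)⁻¹ := by linarith
    have hCexp : (1-(K:ℝ)⁻¹)^T ≤ Real.exp (-(T/K)) := by
      rw [Real.rpow_def_of_pos hbK]
      apply Real.exp_le_exp.2
      have hlg : Real.log (1-(K:ℝ)⁻¹) ≤ -(K:ℝ)⁻¹ := by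
        have := Real.log_le_sub_one_of_pos hbK
        linarith
      have hmul := mul_le_mul_of_nonneg_right hlg hT0
      have he : -(K:ℝ)⁻¹ * T = -(T/K) := by rw [div_eq_mul_inv]; ring
      linarith [he ▸ hmul]
    have hpart1 : ∑ k ∈ Finset.Icc 1 K, (k:ℝ)⁻¹ * (1-(k:ℝ)⁻¹)^T
        ≤ Real.exp (-(T/K)) * ∑ k ∈ Finset.Icc 1 d, (k:ℝ)⁻¹ := by
      have hstepa : ∑ k ∈ Finset.Icc 1 K, (k:ℝ)⁻¹ * (1-(k:ℝ)⁻¹)^T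
          ≤ ∑ k ∈ Finset.Icc 1 K, (k:ℝ)⁻¹ * (1-(K:ℝ)⁻¹)^T := by
        apply Finset.sum_le_sum
        intro k hk
        obtain ⟨hk1, hkK⟩ := Finset.mem_Icc.1 hk
        have hk0 : (0:ℝ) < k := by exact_mod_cast (by omega : 0 < k)
        have hki : (K:ℝ)⁻¹ ≤ (k:ℝ)⁻¹ := inv_anti₀ hk0 (by exact_mod_cast hkK)
        have hknn : (0:ℝ) ≤ 1 - (k:ℝ)⁻¹ := by
          have hki1 : (k:ℝ)⁻¹ ≤ 1 := by
            rw [inv_le_one_iff₀]; right; exact_mod_cast hk1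
          linarith
        apply mul_le_mul_of_nonneg_left _ (by positivity)
        exact Real.rpow_le_rpow hknn (by linarith) hT0
      have hstepc : ∑ k ∈ Finset.Icc 1 K, (k:ℝ)⁻¹ ≤ ∑ k ∈ Finset.Icc 1 d, (k:ℝ)⁻¹ := by
        apply Finset.sum_le_sum_of_subset_of_nonneg (Finset.Icc_subset_Icc le_rfl hKd)
        intro k hk _
        have hk1 : 1 ≤ k := (Finset.mem_Icc.1 hk).1
        have : (0:ℝ) < k := by exact_mod_cast hk1
        positivity
      calc ∑ k ∈ Finset.Icc 1 K, (k:ℝ)⁻¹ * (1-(k:ℝ)⁻¹)^T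
          ≤ ∑ k ∈ Finset.Icc 1 K, (k:ℝ)⁻¹ * (1-(K:ℝ)⁻¹)^T := hstepa
        _ = (1-(K:ℝ)⁻¹)^T * ∑ k ∈ Finset.Icc 1 K, (k:ℝ)⁻¹ := by
            rw [Finset.mul_sum]; exact Finset.sum_congr rfl fun k _ => mul_comm _ _
        _ ≤ Real.exp (-(T/K)) * ∑ k ∈ Finset.Icc 1 d, (k:ℝ)⁻¹ := by
            apply mul_le_mul hCexp hstepc _ (Real.exp_nonneg _)
            apply Finset.sum_nonneg
            intro k hk
            have hk1 : 1 ≤ k := (Finset.mem_Icc.1 hk).1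
            have : (0:ℝ) < k := by exact_mod_cast hk1
            positivity
    -- part 2
    have hpart2 : ∑ k ∈ Finset.Icc (K+1) d, (k:ℝ)⁻¹ * (1-(k:ℝ)⁻¹)^T
        ≤ (1-τ'') * Real.log d := by
      have h1 : ∑ k ∈ Finset.Icc (K+1) d, (k:ℝ)⁻¹ * (1-(k:ℝ)⁻¹)^T
          ≤ ∑ k ∈ Finset.Icc (K+1) d, (k:ℝ)⁻¹ := by
        apply Finset.sum_le_sum
        intro k hk
        obtain ⟨hk1, hkd⟩ := Finset.mem_Icc.1 hk
        have hmem : k ∈ Finset.Icc 1 d := Finset.mem_Icc.2 ⟨by omega, hkd⟩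
        obtain ⟨hb0, hb1⟩ := hbase k hmem
        have hk0 : (0:ℝ) < k := by exact_mod_cast (by omega : 0 < k)
        calc (k:ℝ)⁻¹ * (1-(k:ℝ)⁻¹)^T ≤ (k:ℝ)⁻¹ * 1 :=
              mul_le_mul_of_nonneg_left (Real.rpow_le_one hb0 hb1 hT0) (by positivity)
          _ = (k:ℝ)⁻¹ := mul_one _
      have h2 := sum_inv_le K (by omega) d hKd
      have h3 : τ'' * Real.log d ≤ Real.log K := by
        have := Real.log_le_log (Real.rpow_pos_of_pos hd0 τ'') hKge
        rwa [Real.log_rpow hd0] at this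
      linarith
    -- exp comparison
    have hexpc : Real.exp (-(T/K)) ≤ Real.exp (-((d:ℝ)^(τ-τ'')/2)) := by
      apply Real.exp_le_exp.2
      have h1 : (d:ℝ)^(τ-τ'')/2 ≤ T/K := by
        have hK2d : (K:ℝ) ≤ 2 * (d:ℝ)^τ'' := by linarith
        have h2 : T/(2*(d:ℝ)^τ'') ≤ T/K :=
          div_le_div_of_nonneg_left hT0 hK0 hK2d
        have h3 : T/(2*(d:ℝ)^τ'') = (d:ℝ)^(τ-τ'')/2 := by
          rw [hT, Real.rpow_sub hd0]
          ring
        rw [h3] at h2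
        linarith
      linarith
    -- conclude
    have h1τ'' : (0:ℝ) ≤ 1 - τ'' := by linarith
    have hfdiv : (∑ k ∈ Finset.Icc 1 d, (k:ℝ)⁻¹ * (1-(k:ℝ)⁻¹)^T)
        / (∑ k ∈ Finset.Icc 1 d, (k:ℝ)⁻¹)
        ≤ Real.exp (-(T/K)) + (1-τ'') := by
      rw [div_le_iff₀ hHpos]
      have h4 : (1-τ'') * Real.log d ≤ (1-τ'') * ∑ k ∈ Finset.Icc 1 d, (k:ℝ)⁻¹ :=
        mul_le_mul_of_nonneg_left hHlb h1τ''
      have h5 := hpart1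
      have h6 := hpart2
      rw [add_mul]
      linarith [hsplit]
    calc (∑ k ∈ Finset.Icc 1 d, (k:ℝ)⁻¹ * (1-(k:ℝ)⁻¹)^T)
        / (∑ k ∈ Finset.Icc 1 d, (k:ℝ)⁻¹)
        ≤ Real.exp (-(T/K)) + (1-τ'') := hfdiv
      _ ≤ Real.exp (-((d:ℝ)^(τ-τ'')/2)) + (1-τ'') := by linarith
      _ < b := by linarith
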